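/- Let G be a finite connected simple graph with edge set E, let U(x) = ∑_T ∏_{e ∉ E(T)} x_e be its first Symanzik polynomial, let m : E → ℝ satisfy m_e ≠ 0 for every e ∈ E, and let F_0 ∈ ℝ[x_e : e ∈ E] be a polynomial with nonnegative coefficients whose Newton polytope is contained in N[U] + Δ, where Δ = conv{e_1, ..., e_{|E|}} is the standard simplex of unit vectors in ℝ^E. Then the polynomial F = F_0 + U · (∑_{e ∈ E} m_e² x_e) satisfies N[F] = N[U] + Δ, and this Newton polytope is a generalized permutohedron. -/

import Mathlib

open MvPolynomial
open scoped Pointwise Classical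

section GraphAux
open SimpleGraph

lemma reachDel {V : Type} {H : SimpleGraph V} (x y : V) :
    ∀ {c v : V} (_ : H.Walk c v),
      ((H.deleteEdges {s(x,y)}).Reachable x c ∨ (H.deleteEdges {s(x,y)}).Reachable y c) →
      ((H.deleteEdges {s(x,y)}).Reachable x v ∨ (H.deleteEdges {s(x,y)}).Reachable y v) := by
  intro c v p
  induction p with
  | nil => exact id
  | @cons c d v h q ih =>
    intro hc
    apply ih
    by_cases hedge : s(c, d) = s(x, y)
    · rcases Sym2.eq_iff.mp hedge with ⟨rfl, rfl⟩ | ⟨rfl, rfl⟩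
      · exact Or.inr (Reachable.refl _)
      · exact Or.inl (Reachable.refl _)
    · have hadj : (H.deleteEdges {s(x,y)}).Adj c d := by
        rw [deleteEdges_adj]
        exact ⟨h, by simpa using hedge⟩
      exact hc.imp (fun hr => hr.trans hadj.reachable) (fun hr => hr.trans hadj.reachable)

lemma reachDel' {V : Type} {H : SimpleGraph V} (x y v : V) (h : H.Reachable x v) :
    (H.deleteEdges {s(x,y)}).Reachable x v ∨ (H.deleteEdges {s(x,y)}).Reachable y v := by
  obtain ⟨p⟩ := h
  exact reachDel x y p (Or.inl (Reachable.refl x))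

lemma crossLemma {V : Type} {H : SimpleGraph V} (A : Set V) :
    ∀ {a b : V} (p : H.Walk a b), p.IsPath → a ∈ A → b ∉ A →
      ∃ u w : V, u ∈ A ∧ w ∉ A ∧ H.Adj u w ∧
        (H.deleteEdges {s(u,w)}).Reachable a u ∧ (H.deleteEdges {s(u,w)}).Reachable w b := by
  intro a b p
  induction p with
  | nil => intro _ ha hb; exact absurd ha hb
  | @cons a c b h q ih =>
    intro hp ha hb
    rw [SimpleGraph.Walk.cons_isPath_iff] at hp
    by_cases hc : c ∈ A
    · obtain ⟨u, w, hu, hw, hadj, h1, h2⟩ := ih hp.1 hc hb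
      refine ⟨u, w, hu, hw, hadj, ?_, h2⟩
      have hne : s(a, c) ≠ s(u, w) := by
        intro hEq
        rcases Sym2.eq_iff.mp hEq with ⟨rfl, rfl⟩ | ⟨rfl, rfl⟩
        · exact hw hc
        · exact hw ha
      have hadj' : (H.deleteEdges {s(u,w)}).Adj a c := by
        rw [deleteEdges_adj]; exact ⟨h, by simpa using hne⟩
      exact hadj'.reachable.trans h1
    · refine ⟨a, c, ha, hc, h, Reachable.refl a, ?_⟩
      have hq' : ∀ e ∈ q.edges, e ∉ ({s(a,c)} : Set (Sym2 V)) := by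
        intro e he hmem
        rw [Set.mem_singleton_iff] at hmem
        subst hmem
        exact hp.2 (q.fst_mem_support_of_mem_edges he)
      exact ⟨q.toDeleteEdges _ hq'⟩

lemma exchangeLemma {V : Type} [DecidableEq V] {T1 T2 : SimpleGraph V}
    (h1 : T1.IsTree) (h2 : T2.IsTree) {a b : V}
    (he1 : T1.Adj a b) (he2 : s(a,b) ∉ T2.edgeSet) :
    ∃ f : Sym2 V, f ∈ T2.edgeSet ∧ f ∉ T1.edgeSet ∧
      ∃ T1' T2' : SimpleGraph V, T1'.IsTree ∧ T2'.IsTree ∧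
        T1'.edgeSet = (T1.edgeSet \ {s(a,b)}) ∪ {f} ∧
        T2'.edgeSet = (T2.edgeSet \ {f}) ∪ {s(a,b)} := by
  have hdel : ∀ (H : SimpleGraph V) (s : Set (Sym2 V)), H.deleteEdges s = H \ fromEdgeSet s :=
    fun _ _ => rfl
  have hab : a ≠ b := he1.ne
  -- A = vertices reachable from a in T1 - e
  set A : Set V := {v | (T1.deleteEdges {s(a,b)}).Reachable a v} with hA
  have hbA : b ∉ A := by
    have hbr : ¬ (T1 \ fromEdgeSet {s(a,b)}).Reachable a b :=
      isBridge_iff.mp (isAcyclic_iff_forall_adj_isBridge.mp h1.2 he1)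
    rw [← hdel] at hbr
    exact hbr
  -- path from a to b in T2
  obtain ⟨p0⟩ := h2.1.preconnected a b
  obtain ⟨u, w, hu, hw, hadj, hra, hrwb⟩ :=
    crossLemma A (p0.toPath : T2.Path a b).1 (p0.toPath : T2.Path a b).2
      (Reachable.refl a) hbA
  have huw : u ≠ w := hadj.ne
  have hfT2 : s(u,w) ∈ T2.edgeSet := hadj
  have hfe : s(u,w) ≠ s(a,b) := by
    intro hEq; rw [hEq] at hfT2; exact he2 hfT2
  have hfT1 : s(u,w) ∉ T1.edgeSet := by
    intro hf
    have : (T1.deleteEdges {s(a,b)}).Adj u w := by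
      rw [deleteEdges_adj]
      exact ⟨hf, by simpa using hfe⟩
    exact hw (hu.trans this.reachable)
  -- the two new graphs
  set T1' : SimpleGraph V := T1.deleteEdges {s(a,b)} ⊔ fromEdgeSet {s(u,w)} with hT1'
  set T2' : SimpleGraph V := T2.deleteEdges {s(u,w)} ⊔ fromEdgeSet {s(a,b)} with hT2'
  have hes1 : T1'.edgeSet = (T1.edgeSet \ {s(a,b)}) ∪ {s(u,w)} := by
    rw [hT1', edgeSet_sup, edgeSet_deleteEdges, edgeSet_fromEdgeSet]
    congr 1
    ext e
    simp only [Set.mem_diff, Set.mem_singleton_iff, Set.mem_setOf_eq]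
    constructor
    · exact fun h => h.1
    · rintro rfl; exact ⟨rfl, by simp [Sym2.mk_isDiag_iff, huw]⟩
  have hes2 : T2'.edgeSet = (T2.edgeSet \ {s(u,w)}) ∪ {s(a,b)} := by
    rw [hT2', edgeSet_sup, edgeSet_deleteEdges, edgeSet_fromEdgeSet]
    congr 1
    ext e
    simp only [Set.mem_diff, Set.mem_singleton_iff, Set.mem_setOf_eq]
    constructor
    · exact fun h => h.1
    · rintro rfl; exact ⟨rfl, by simp [Sym2.mk_isDiag_iff, hab]⟩
  -- reachability facts in T1'
  have hle1 : T1.deleteEdges {s(a,b)} ≤ T1' := le_sup_left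
  have hrauw : T1'.Reachable a w := by
    refine Reachable.trans (hu.mono hle1) (Adj.reachable ?_)
    exact (sup_adj _ _ _ _).mpr (Or.inr ((fromEdgeSet_adj _).mpr ⟨rfl, huw⟩))
  have hreach1 : ∀ v : V, T1'.Reachable a v := by
    intro v
    rcases reachDel' a b v (h1.1.preconnected a v) with hr | hr
    · exact hr.mono hle1
    · -- v reachable from b in T1 - e ; connect b to a in T1'
      have hwB : (T1.deleteEdges {s(a,b)}).Reachable b w := by
        rcases reachDel' a b w (h1.1.preconnected a w) with hr' | hr'
        · exact absurd hr' hw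
        · exact hr'
      exact (hrauw.trans (hwB.mono hle1).symm).trans (hr.mono hle1)
  have hconn1 : T1'.Connected := by
    rw [connected_iff]
    refine ⟨fun v v' => (hreach1 v).symm.trans (hreach1 v'), h1.1.nonempty⟩
  -- acyclicity of T1'
  have hacy1 : T1'.IsAcyclic := by
    intro v c hc
    by_cases hf : s(u,w) ∈ c.edges
    · have hreach : (T1' \ fromEdgeSet {s(u,w)}).Reachable u w :=
        (adj_and_reachable_delete_edges_iff_exists_cycle.mpr ⟨v, c, hc, hf⟩).2
      have hmono : (T1' \ fromEdgeSet {s(u,w)}) ≤ T1.deleteEdges {s(a,b)} := by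
        intro p q hpq
        rw [sdiff_adj] at hpq
        rcases (sup_adj _ _ _ _).mp hpq.1 with h' | h'
        · exact h'
        · exact absurd h' hpq.2
      exact hw (hu.trans (hreach.mono hmono))
    · have hedges : ∀ e ∈ c.edges, e ∈ T1.edgeSet := by
        intro e he
        have := c.edges_subset_edgeSet he
        rw [hes1] at this
        rcases this with h' | h'
        · exact h'.1
        · rw [Set.mem_singleton_iff] at h'; subst h'; exact absurd he hf
      exact h1.2 _ (hc.transfer hedges)
  -- reachability in T2'
  have hle2 : T2.deleteEdges {s(u,w)} ≤ T2' := le_sup_left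
  have hruw2 : T2'.Reachable u w := by
    have h1' : T2'.Reachable u a := (hra.mono hle2).symm
    have h2' : T2'.Reachable a b :=
      Adj.reachable ((sup_adj _ _ _ _).mpr (Or.inr ((fromEdgeSet_adj _).mpr ⟨rfl, hab⟩)))
    have h3' : T2'.Reachable b w := (hrwb.mono hle2).symm
    exact (h1'.trans h2').trans h3'
  have hreach2 : ∀ v : V, T2'.Reachable u v := by
    intro v
    rcases reachDel' u w v (h2.1.preconnected u v) with hr | hr
    · exact hr.mono hle2
    · exact hruw2.trans (hr.mono hle2)
  have hconn2 : T2'.Connected := by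
    rw [connected_iff]
    refine ⟨fun v v' => (hreach2 v).symm.trans (hreach2 v'), h2.1.nonempty⟩
  have hacy2 : T2'.IsAcyclic := by
    intro v c hc
    by_cases hf : s(a,b) ∈ c.edges
    · have hreach : (T2' \ fromEdgeSet {s(a,b)}).Reachable a b :=
        (adj_and_reachable_delete_edges_iff_exists_cycle.mpr ⟨v, c, hc, hf⟩).2
      have hmono : (T2' \ fromEdgeSet {s(a,b)}) ≤ T2.deleteEdges {s(u,w)} := by
        intro p q hpq
        rw [sdiff_adj] at hpq
        rcases (sup_adj _ _ _ _).mp hpq.1 with h' | h'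
        · exact h'
        · exact absurd h' hpq.2
      have hreachuw : (T2.deleteEdges {s(u,w)}).Reachable u w :=
        (hra.symm.trans (hreach.mono hmono)).trans hrwb.symm
      have hcyc := adj_and_reachable_delete_edges_iff_exists_cycle.mp
        ⟨hadj, hreachuw⟩
      obtain ⟨v', c', hc', _⟩ := hcyc
      exact h2.2 _ hc'
    · have hedges : ∀ e ∈ c.edges, e ∈ T2.edgeSet := by
        intro e he
        have := c.edges_subset_edgeSet he
        rw [hes2] at this
        rcases this with h' | h'
        · exact h'.1
        · rw [Set.mem_singleton_iff] at h'; subst h'; exact absurd he hf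
      exact h2.2 _ (hc.transfer hedges)
  exact ⟨s(u,w), hfT2, hfT1, T1', T2', ⟨hconn1, hacy1⟩, ⟨hconn2, hacy2⟩, hes1, hes2⟩

end GraphAux

-- endpoints of an extreme segment are extreme points
lemma seg_endpoint_extreme {E : Type*} [AddCommGroup E] [Module ℝ E] {P : Set E} {x y : E}
    (hxy : x ≠ y) (h : IsExtreme ℝ P (segment ℝ x y)) : x ∈ Set.extremePoints ℝ P := by
  rw [mem_extremePoints]
  refine ⟨h.1 (left_mem_segment ℝ x y), ?_⟩
  intro u hu v hv hxseg
  obtain ⟨hu', hv'⟩ := And.intro (h.2 hu hv (left_mem_segment ℝ x y) hxseg)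
    (h.right_mem_of_mem_openSegment hu hv (left_mem_segment ℝ x y) hxseg)
  rw [segment_eq_image] at hu' hv'
  obtain ⟨s, hs, rfl⟩ := hu'
  obtain ⟨t, ht, rfl⟩ := hv'
  rw [openSegment_eq_image] at hxseg
  obtain ⟨θ, hθ, hx⟩ := hxseg
  simp only [Set.mem_Icc] at hs ht
  simp only [Set.mem_Ioo] at hθ
  have key : ((1-θ)*s + θ*t) • (y - x) = 0 := by
    linear_combination (norm := module) hx
  have hcoef : (1-θ)*s + θ*t = 0 := by
    rcases smul_eq_zero.mp key with h0 | h0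
    · exact h0
    · exact absurd (sub_eq_zero.mp h0) (Ne.symm hxy)
  have hs0 : s = 0 := by nlinarith [hθ.1, hθ.2, hs.1, hs.2, ht.1, ht.2]
  have ht0 : t = 0 := by nlinarith [hθ.1, hθ.2, hs.1, hs.2, ht.1, ht.2]
  subst hs0; subst ht0; simp

lemma prodX {ι : Type} (s : Finset ι) :
    (∏ e ∈ s, (X e : MvPolynomial ι ℝ)) = monomial (∑ e ∈ s, Finsupp.single e 1) 1 := by
  induction s using Finset.induction_on with
  | empty => simp
  | insert _ _ hnotmem ih =>
    rw [Finset.prod_insert hnotmem, Finset.sum_insert hnotmem, ih]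
    rw [X, monomial_mul, one_mul]

lemma supp_mul_eq {ι : Type} [DecidableEq ι] {p q : MvPolynomial ι ℝ}
    (hp : ∀ d, 0 ≤ p.coeff d) (hq : ∀ d, 0 ≤ q.coeff d) :
    (p * q).support = p.support + q.support := by
  apply subset_antisymm (support_mul p q)
  intro d hd
  rw [Finset.mem_add] at hd
  obtain ⟨a, ha, b, hb, rfl⟩ := hd
  rw [mem_support_iff] at ha hb ⊢
  have hpos : 0 < p.coeff a * q.coeff b :=
    lt_of_le_of_ne (mul_nonneg (hp a) (hq b)) (Ne.symm (mul_ne_zero ha hb))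
  have hle : p.coeff a * q.coeff b ≤ (p * q).coeff (a + b) := by
    rw [coeff_mul]
    refine Finset.single_le_sum (a := (a, b))
      (f := fun x : (ι →₀ ℕ) × (ι →₀ ℕ) => p.coeff x.1 * q.coeff x.2)
      (fun i _ => mul_nonneg (hp i.1) (hq i.2)) ?_
    exact Finset.HasAntidiagonal.mem_antidiagonal.mpr rfl
  exact ne_of_gt (lt_of_lt_of_le hpos hle)

noncomputable def nuF {V : Type} (G T : SimpleGraph V) : G.edgeSet → ℝ :=
  fun e => if (e : Sym2 V) ∈ T.edgeSet then (0:ℝ) else 1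

section GraphAux2
open SimpleGraph

lemma caseTwo {V : Type} [DecidableEq V] {G : SimpleGraph V}
    (P : Set (G.edgeSet → ℝ))
    (hmem : ∀ T : SimpleGraph V, T ≤ G → T.IsTree → ∀ g : G.edgeSet,
      nuF G T + Pi.single g 1 ∈ P)
    {T1 T2 : SimpleGraph V} (hT1G : T1 ≤ G) (hT1 : T1.IsTree) (hT2G : T2 ≤ G) (hT2 : T2.IsTree)
    (f : G.edgeSet) {x y : G.edgeSet → ℝ}
    (hx : x = nuF G T1 + Pi.single f 1) (hy : y = nuF G T2 + Pi.single f 1)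
    (e : G.edgeSet) (he1 : (e : Sym2 V) ∈ T1.edgeSet) (he2 : (e : Sym2 V) ∉ T2.edgeSet)
    (hext : IsExtreme ℝ P (segment ℝ x y)) :
    ∃ i j : G.edgeSet, i ≠ j ∧ ∃ c : ℝ,
      y - x = c • ((Pi.single i 1 : G.edgeSet → ℝ) - Pi.single j 1) := by
  obtain ⟨a, b, hab⟩ : ∃ a b : V, (e : Sym2 V) = s(a,b) :=
    Sym2.ind (fun a b => ⟨a, b, rfl⟩) (e : Sym2 V)
  rw [hab] at he1 he2
  have he1' : T1.Adj a b := (mem_edgeSet T1).mp he1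
  obtain ⟨f', hf'T2, hf'T1, T1', T2', hT1'tree, hT2'tree, hes1, hes2⟩ :=
    exchangeLemma hT1 hT2 he1' he2
  have hf'G : f' ∈ G.edgeSet := edgeSet_mono hT2G hf'T2
  set i : G.edgeSet := e with hidef
  set j : G.edgeSet := ⟨f', hf'G⟩ with hjdef
  have hne_ef : s(a,b) ≠ f' := fun hEq => hf'T1 (hEq ▸ he1)
  have hij : i ≠ j := by
    intro hEq
    apply hne_ef
    rw [← hab]
    exact congrArg Subtype.val hEq
  have hT1'G : T1' ≤ G := by
    rw [← edgeSet_subset_edgeSet, hes1]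
    rintro z (⟨hz, -⟩ | hz)
    · exact edgeSet_mono hT1G hz
    · rw [Set.mem_singleton_iff] at hz; subst hz; exact hf'G
  have hT2'G : T2' ≤ G := by
    rw [← edgeSet_subset_edgeSet, hes2]
    rintro z (⟨hz, -⟩ | hz)
    · exact edgeSet_mono hT2G hz
    · rw [Set.mem_singleton_iff] at hz; subst hz; rw [← hab]; exact e.2
  -- pointwise identities
  have hival : (i : Sym2 V) = s(a,b) := hab
  have hjval : (j : Sym2 V) = f' := rfl
  have hUU : nuF G T1' = nuF G T1 + Pi.single i 1 - Pi.single j 1 := by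
    funext g
    simp only [nuF, Pi.sub_apply, Pi.add_apply, Pi.single_apply]
    simp only [hes1]
    by_cases hg1 : g = i
    · subst hg1
      rw [hival]
      have h1 : s(a,b) ∉ (T1.edgeSet \ {s(a,b)}) ∪ {f'} := by
        simp [hne_ef]
      rw [if_neg h1, if_pos he1, if_pos rfl, if_neg hij]
      norm_num
    · by_cases hg2 : g = j
      · subst hg2
        rw [hjval]
        have h1 : f' ∈ (T1.edgeSet \ {s(a,b)}) ∪ {f'} := Or.inr rfl
        rw [if_pos h1, if_neg hf'T1, if_neg (fun h => hg1 h), if_pos rfl]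
        norm_num
      · have hgv1 : (g : Sym2 V) ≠ s(a,b) := by
          intro h; exact hg1 (Subtype.ext (h.trans hival.symm))
        have hgv2 : (g : Sym2 V) ≠ f' := by
          intro h; exact hg2 (Subtype.ext h)
        have h1 : (g : Sym2 V) ∈ (T1.edgeSet \ {s(a,b)}) ∪ {f'} ↔ (g : Sym2 V) ∈ T1.edgeSet := by
          simp [hgv1, hgv2]
        rw [if_neg hg1, if_neg hg2]
        by_cases hmem1 : (g : Sym2 V) ∈ T1.edgeSet
        · rw [if_pos (h1.mpr hmem1), if_pos hmem1]; norm_num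
        · rw [if_neg (fun h => hmem1 (h1.mp h)), if_neg hmem1]; norm_num
  have hVV : nuF G T2' = nuF G T2 - Pi.single i 1 + Pi.single j 1 := by
    funext g
    simp only [nuF, Pi.sub_apply, Pi.add_apply, Pi.single_apply]
    simp only [hes2]
    by_cases hg1 : g = i
    · subst hg1
      rw [hival]
      have h1 : s(a,b) ∈ (T2.edgeSet \ {f'}) ∪ {s(a,b)} := Or.inr rfl
      rw [if_pos h1, if_neg he2, if_pos rfl, if_neg hij]
      norm_num
    · by_cases hg2 : g = j
      · subst hg2
        rw [hjval]
        have h1 : f' ∉ (T2.edgeSet \ {f'}) ∪ {s(a,b)} := by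
          simp [Ne.symm hne_ef]
        rw [if_neg h1, if_pos hf'T2, if_neg (fun h => hg1 h), if_pos rfl]
        norm_num
      · have hgv1 : (g : Sym2 V) ≠ s(a,b) := by
          intro h; exact hg1 (Subtype.ext (h.trans hival.symm))
        have hgv2 : (g : Sym2 V) ≠ f' := by
          intro h; exact hg2 (Subtype.ext h)
        have h1 : (g : Sym2 V) ∈ (T2.edgeSet \ {f'}) ∪ {s(a,b)} ↔ (g : Sym2 V) ∈ T2.edgeSet := by
          simp [hgv1, hgv2]
        rw [if_neg hg1, if_neg hg2]
        by_cases hmem1 : (g : Sym2 V) ∈ T2.edgeSet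
        · rw [if_pos (h1.mpr hmem1), if_pos hmem1]; norm_num
        · rw [if_neg (fun h => hmem1 (h1.mp h)), if_neg hmem1]; norm_num
  -- apply extremeness at the midpoint
  set uu : G.edgeSet → ℝ := nuF G T1' + Pi.single f 1 with huudef
  set vv : G.edgeSet → ℝ := nuF G T2' + Pi.single f 1 with hvvdef
  have hsum : uu + vv = x + y := by
    rw [huudef, hvvdef, hx, hy, hUU, hVV]; abel
  have hz_seg : (2⁻¹ : ℝ) • x + (2⁻¹ : ℝ) • y ∈ segment ℝ x y :=
    ⟨2⁻¹, 2⁻¹, by norm_num, by norm_num, by norm_num, rfl⟩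
  have hz_open : (2⁻¹ : ℝ) • x + (2⁻¹ : ℝ) • y ∈ openSegment ℝ uu vv := by
    refine ⟨2⁻¹, 2⁻¹, by norm_num, by norm_num, by norm_num, ?_⟩
    rw [← smul_add, hsum, smul_add]
  have huu := hext.2 (hmem T1' hT1'G hT1'tree f) (hmem T2' hT2'G hT2'tree f)
    hz_seg hz_open
  rw [segment_eq_image] at huu
  obtain ⟨t, ht, hteq⟩ := huu
  rw [Set.mem_Icc] at ht
  have hti := congrFun hteq i
  simp only [Pi.add_apply, Pi.smul_apply, smul_eq_mul] at hti
  have hxi : x i = (Pi.single f 1 : G.edgeSet → ℝ) i := by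
    rw [hx]; simp only [Pi.add_apply, nuF]; rw [hival, if_pos he1, zero_add]
  have hyi : y i = 1 + (Pi.single f 1 : G.edgeSet → ℝ) i := by
    rw [hy]; simp only [Pi.add_apply, nuF]; rw [hival, if_neg he2]
  have huui : nuF G T1' i = 1 := by
    rw [hUU]
    simp only [Pi.add_apply, Pi.sub_apply, Pi.single_apply, nuF]
    rw [hival]
    simp [he1, hij]
  rw [hxi, hyi, huui] at hti
  have ht1 : t = 1 := by linarith
  have hyuu : y = nuF G T1' + Pi.single f 1 := by
    rw [← hteq, ht1]; simp
  refine ⟨i, j, hij, 1, ?_⟩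
  rw [hyuu, hx, hUU, one_smul]
  abel

end GraphAux2

noncomputable def DD {V : Type} [Fintype V] [DecidableEq V] (G : SimpleGraph V)
    [DecidableRel G.Adj] (T : SimpleGraph V) : G.edgeSet →₀ ℕ :=
  ∑ e ∈ Finset.univ.filter (fun e : G.edgeSet => ¬ (e : Sym2 V) ∈ T.edgeSet),
    Finsupp.single e 1

lemma DD_apply {V : Type} [Fintype V] [DecidableEq V] (G : SimpleGraph V)
    [DecidableRel G.Adj] (T : SimpleGraph V) (g : G.edgeSet) :
    (DD G T) g = if (g : Sym2 V) ∈ T.edgeSet then 0 else 1 := by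
  rw [DD, Finsupp.finset_sum_apply]
  have h1 : ∀ e ∈ Finset.univ.filter (fun e : G.edgeSet => ¬ (e : Sym2 V) ∈ T.edgeSet),
      (Finsupp.single e (1:ℕ)) g = if e = g then 1 else 0 := by
    intro e _; rw [Finsupp.single_apply]
  rw [Finset.sum_congr rfl h1, Finset.sum_ite_eq' _ g (fun _ => (1:ℕ))]
  by_cases hg : (g : Sym2 V) ∈ T.edgeSet
  · rw [if_pos hg, if_neg (by simp [hg])]
  · rw [if_neg hg, if_pos (by simp [hg])]

lemma phi_DD {V : Type} [Fintype V] [DecidableEq V] (G : SimpleGraph V)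
    [DecidableRel G.Adj] (T : SimpleGraph V) :
    (fun e => (((DD G T) e : ℕ) : ℝ)) = nuF G T := by
  funext g
  rw [DD_apply]
  by_cases hg : (g : Sym2 V) ∈ T.edgeSet <;> simp [nuF, hg]

lemma phi_single {V : Type} [Fintype V] [DecidableEq V] (G : SimpleGraph V)
    [DecidableRel G.Adj] (f : G.edgeSet) :
    (fun e => (((Finsupp.single f 1 : G.edgeSet →₀ ℕ) e : ℕ) : ℝ)) = Pi.single f 1 := by
  funext g
  rw [Finsupp.single_apply, Pi.single_apply]
  by_cases h : f = g
  · subst h; rw [if_pos rfl, if_pos rfl]; norm_num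
  · rw [if_neg h, if_neg (fun h' => h h'.symm)]; norm_num


set_option maxHeartbeats 1000000 in
/-- Let `G` be a finite connected simple graph with first Symanzik
polynomial `U = ∑_T ∏_{e ∉ E(T)} x_e`, let `m : E → ℝ` be nowhere zero, and let `F₀` be
a polynomial with nonnegative coefficients whose Newton polytope is contained in
`N[U] + Δ`, where `Δ` is the standard simplex of unit vectors in `ℝᴱ`. Then
`F = F₀ + U · ∑_e m_e² x_e` satisfies `N[F] = N[U] + Δ`, and `N[F]` is a generalized
permutohedron. -/
theorem symanzik_F_newton_polytope_generalized_permutohedron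
    {V : Type} [Fintype V] [DecidableEq V] (G : SimpleGraph V) [DecidableRel G.Adj]
    (hG : G.Connected)
    (U : MvPolynomial G.edgeSet ℝ)
    (hU : U = ∑ T ∈ Finset.univ.filter (fun T : SimpleGraph V => T ≤ G ∧ T.IsTree),
      ∏ e : G.edgeSet, if (e : Sym2 V) ∈ T.edgeSet then 1 else X e)
    (m : G.edgeSet → ℝ) (hm : ∀ e, m e ≠ 0)
    (newton : MvPolynomial G.edgeSet ℝ → Set (G.edgeSet → ℝ))
    (hnewton : ∀ f : MvPolynomial G.edgeSet ℝ,
      newton f = convexHull ℝ ((fun d : G.edgeSet →₀ ℕ => fun e => (d e : ℝ)) '' ↑f.support))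
    (Δ : Set (G.edgeSet → ℝ))
    (hΔ : Δ = convexHull ℝ (Set.range fun e : G.edgeSet => (Pi.single e 1 : G.edgeSet → ℝ)))
    (F0 : MvPolynomial G.edgeSet ℝ) (hF0pos : ∀ d, 0 ≤ F0.coeff d)
    (hF0newton : newton F0 ⊆ newton U + Δ)
    (F : MvPolynomial G.edgeSet ℝ)
    (hF : F = F0 + U * ∑ e : G.edgeSet, C (m e ^ 2) * X e) :
    newton F = newton U + Δ ∧
    ∀ x y : G.edgeSet → ℝ, x ≠ y → IsExtreme ℝ (newton F) (segment ℝ x y) →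
      ∃ i j : G.edgeSet, i ≠ j ∧ ∃ c : ℝ,
        y - x = c • ((Pi.single i 1 : G.edgeSet → ℝ) - Pi.single j 1) := by
  set φ : (G.edgeSet →₀ ℕ) → (G.edgeSet → ℝ) := fun d => fun e => (d e : ℝ) with hφdef
  set trees : Finset (SimpleGraph V) :=
    Finset.univ.filter (fun T : SimpleGraph V => T ≤ G ∧ T.IsTree) with htrees
  set L : MvPolynomial G.edgeSet ℝ := ∑ e : G.edgeSet, C (m e ^ 2) * X e with hL
  -- the product over edges is a monomial
  have hprodT : ∀ T : SimpleGraph V,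
      (∏ e : G.edgeSet, if (e : Sym2 V) ∈ T.edgeSet then (1 : MvPolynomial G.edgeSet ℝ) else X e)
        = monomial (DD G T) 1 := by
    intro T
    rw [Finset.prod_ite (fun _ => (1 : MvPolynomial G.edgeSet ℝ)) (fun e => X e),
      Finset.prod_const_one, one_mul, prodX, DD]
  -- coefficients of U
  have hcoeffU : ∀ d, coeff d U = ((trees.filter (fun T => DD G T = d)).card : ℝ) := by
    intro d
    rw [hU, coeff_sum]
    rw [Finset.sum_congr rfl (fun T _ => by rw [hprodT T, coeff_monomial])]
    exact Finset.sum_boole _ _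
  have hUpos : ∀ d, 0 ≤ coeff d U := by
    intro d; rw [hcoeffU]; positivity
  have hsuppU : ∀ d, d ∈ U.support ↔ ∃ T : SimpleGraph V, (T ≤ G ∧ T.IsTree) ∧ DD G T = d := by
    intro d
    rw [mem_support_iff]
    constructor
    · intro h
      rw [hcoeffU] at h
      have hcard : 0 < (trees.filter (fun T => DD G T = d)).card :=
        Nat.pos_of_ne_zero (fun h0 => h (by rw [h0]; norm_num))
      obtain ⟨T, hT⟩ := Finset.card_pos.mp hcard
      rw [Finset.mem_filter] at hT
      have hT2 := hT.1
      rw [htrees, Finset.mem_filter] at hT2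
      exact ⟨T, hT2.2, hT.2⟩
    · rintro ⟨T, hT, rfl⟩
      rw [hcoeffU]
      have : T ∈ trees.filter (fun T' => DD G T' = DD G T) := by
        rw [Finset.mem_filter, htrees, Finset.mem_filter]
        exact ⟨⟨Finset.mem_univ _, hT⟩, rfl⟩
      have hcard := Finset.card_pos.mpr ⟨T, this⟩
      positivity
  -- coefficients of L
  have hcoeffL : ∀ d, coeff d L =
      ∑ e : G.edgeSet, if (Finsupp.single e 1 : G.edgeSet →₀ ℕ) = d then m e ^ 2 else 0 := by
    intro d
    rw [hL, coeff_sum]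
    exact Finset.sum_congr rfl (fun e _ => by rw [C_mul_X_eq_monomial, coeff_monomial])
  have hLpos : ∀ d, 0 ≤ coeff d L := by
    intro d
    rw [hcoeffL]
    apply Finset.sum_nonneg
    intro e _
    split_ifs
    · exact sq_nonneg _
    · exact le_refl 0
  have hsuppL : ∀ d, d ∈ L.support ↔ ∃ g : G.edgeSet, (Finsupp.single g 1 : G.edgeSet →₀ ℕ) = d := by
    intro d
    rw [mem_support_iff]
    constructor
    · intro h
      rw [hcoeffL] at h
      obtain ⟨e, _, he⟩ := Finset.exists_ne_zero_of_sum_ne_zero h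
      refine ⟨e, ?_⟩
      by_contra hne
      rw [if_neg hne] at he
      exact he rfl
    · rintro ⟨g, rfl⟩
      rw [hcoeffL]
      have hcongr : ∀ e ∈ (Finset.univ : Finset G.edgeSet),
          (if (Finsupp.single e 1 : G.edgeSet →₀ ℕ) = Finsupp.single g 1 then m e ^ 2 else 0)
            = if e = g then m e ^ 2 else 0 :=
        fun e _ => if_congr (Finsupp.single_left_inj one_ne_zero) rfl rfl
      rw [Finset.sum_congr rfl hcongr, Finset.sum_ite_eq' _ g (fun e => m e ^ 2),
        if_pos (Finset.mem_univ g)]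
      exact pow_ne_zero 2 (hm g)
  -- support of the product
  have hULsupp : (U * L).support = U.support + L.support := supp_mul_eq hUpos hLpos
  have hULpos : ∀ d, 0 ≤ coeff d (U * L) := by
    intro d
    rw [coeff_mul]
    exact Finset.sum_nonneg (fun i _ => mul_nonneg (hUpos i.1) (hLpos i.2))
  -- support of F
  have hFsupp : F.support = F0.support ∪ (U * L).support := by
    ext d
    rw [Finset.mem_union, mem_support_iff, mem_support_iff, mem_support_iff, hF, coeff_add]
    rw [← not_iff_not, not_or, not_ne_iff, not_ne_iff, not_ne_iff]
    exact add_eq_zero_iff_of_nonneg (hF0pos d) (hULpos d)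
  -- φ is additive on images
  have hadd : ∀ a b : G.edgeSet →₀ ℕ, φ (a + b) = φ a + φ b := by
    intro a b; funext e; simp [hφdef]
  have himg : ∀ A B : Set (G.edgeSet →₀ ℕ), φ '' (A + B) = φ '' A + φ '' B := by
    intro A B
    ext z
    constructor
    · rintro ⟨d, hd, rfl⟩
      rw [Set.mem_add] at hd
      obtain ⟨u, hu, v, hv, rfl⟩ := hd
      rw [Set.mem_add]
      exact ⟨φ u, ⟨u, hu, rfl⟩, φ v, ⟨v, hv, rfl⟩, (hadd u v).symm⟩
    · intro hz
      rw [Set.mem_add] at hz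
      obtain ⟨p, ⟨u, hu, rfl⟩, q, ⟨v, hv, rfl⟩, rfl⟩ := hz
      exact ⟨u + v, Set.add_mem_add hu hv, hadd u v⟩
  -- Newton polytope of L is Δ
  have hNL : convexHull ℝ (φ '' ↑L.support) = Δ := by
    rw [hΔ]
    congr 1
    ext z
    simp only [Set.mem_image, Finset.mem_coe, Set.mem_range]
    constructor
    · rintro ⟨d, hd, rfl⟩
      obtain ⟨g, rfl⟩ := (hsuppL d).mp hd
      exact ⟨g, (phi_single G g).symm⟩
    · rintro ⟨g, rfl⟩
      exact ⟨Finsupp.single g 1, (hsuppL _).mpr ⟨g, rfl⟩, phi_single G g⟩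
  -- Newton polytope of U * L
  have hNUL : newton (U * L) = newton U + Δ := by
    rw [hnewton (U * L), hnewton U, ← hNL, hULsupp, Finset.coe_add, himg, convexHull_add]
  -- Newton polytope of F
  have hNF : newton F = newton (U * L) := by
    rw [hnewton F, hnewton (U * L), hFsupp, Finset.coe_union, Set.image_union]
    apply subset_antisymm
    · apply convexHull_min _ (convex_convexHull ℝ _)
      apply Set.union_subset
      · intro z hz
        have h1 : z ∈ newton F0 := by
          rw [hnewton F0]
          exact subset_convexHull ℝ _ hz
        have h2 := hF0newton h1
        rw [← hNUL, hnewton (U * L)] at h2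
        exact h2
      · exact subset_convexHull ℝ _
    · exact convexHull_mono Set.subset_union_right
  have part1 : newton F = newton U + Δ := hNF.trans hNUL
  refine ⟨part1, ?_⟩
  -- membership of all tree points
  have hmemP : ∀ T : SimpleGraph V, T ≤ G → T.IsTree → ∀ g : G.edgeSet,
      nuF G T + Pi.single g 1 ∈ newton F := by
    intro T hTG hTt g
    rw [hNF, hnewton (U * L)]
    apply subset_convexHull ℝ _
    refine ⟨DD G T + Finsupp.single g 1, ?_, ?_⟩
    · rw [Finset.mem_coe, hULsupp, Finset.mem_add]
      exact ⟨DD G T, (hsuppU _).mpr ⟨T, ⟨hTG, hTt⟩, rfl⟩,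
        Finsupp.single g 1, (hsuppL _).mpr ⟨g, rfl⟩, rfl⟩
    · rw [hadd, ← phi_DD G T, ← phi_single G g]
  intro x y hxy hext
  -- both endpoints are extreme points of newton F, hence in the generating set
  have hxS : x ∈ φ '' ↑((U * L).support) := by
    have hx_ep : x ∈ Set.extremePoints ℝ (newton F) := seg_endpoint_extreme hxy hext
    rw [hNF, hnewton (U * L)] at hx_ep
    exact extremePoints_convexHull_subset hx_ep
  have hyS : y ∈ φ '' ↑((U * L).support) := by
    have hext' : IsExtreme ℝ (newton F) (segment ℝ y x) := by rwa [segment_symm] at hext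
    have hy_ep : y ∈ Set.extremePoints ℝ (newton F) := seg_endpoint_extreme (Ne.symm hxy) hext'
    rw [hNF, hnewton (U * L)] at hy_ep
    exact extremePoints_convexHull_subset hy_ep
  rw [hULsupp, Finset.coe_add, himg] at hxS hyS
  rw [Set.mem_add] at hxS hyS
  obtain ⟨p1, hp1, q1, hq1, hx1⟩ := hxS
  obtain ⟨p2, hp2, q2, hq2, hy1⟩ := hyS
  obtain ⟨d1, hd1, rfl⟩ := hp1
  obtain ⟨dl1, hdl1, rfl⟩ := hq1
  obtain ⟨d2, hd2, rfl⟩ := hp2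
  obtain ⟨dl2, hdl2, rfl⟩ := hq2
  rw [Finset.mem_coe] at hd1 hd2 hdl1 hdl2
  obtain ⟨T1, ⟨hT1G, hT1t⟩, rfl⟩ := (hsuppU d1).mp hd1
  obtain ⟨T2, ⟨hT2G, hT2t⟩, rfl⟩ := (hsuppU d2).mp hd2
  obtain ⟨f1, rfl⟩ := (hsuppL dl1).mp hdl1
  obtain ⟨f2, rfl⟩ := (hsuppL dl2).mp hdl2
  have hxrep : x = nuF G T1 + Pi.single f1 1 := by
    rw [← hx1, ← phi_DD G T1, ← phi_single G f1]
  have hyrep : y = nuF G T2 + Pi.single f2 1 := by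
    rw [← hy1, ← phi_DD G T2, ← phi_single G f2]
  by_cases hf12 : f1 = f2
  · -- same simplex vertex: tree exchange argument
    subst hf12
    have hnuNe : nuF G T1 ≠ nuF G T2 := by
      intro h
      exact hxy (by rw [hxrep, hyrep, h])
    obtain ⟨g, hg⟩ := Function.ne_iff.mp hnuNe
    by_cases hgT1 : (g : Sym2 V) ∈ T1.edgeSet
    · have hgT2 : (g : Sym2 V) ∉ T2.edgeSet := by
        intro h; exact hg (by simp [nuF, hgT1, h])
      exact caseTwo (newton F) hmemP hT1G hT1t hT2G hT2t f1 hxrep hyrep g hgT1 hgT2 hext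
    · have hgT2 : (g : Sym2 V) ∈ T2.edgeSet := by
        by_contra h
        exact hg (by simp [nuF, hgT1, h])
      have hext' : IsExtreme ℝ (newton F) (segment ℝ y x) := by rwa [segment_symm] at hext
      obtain ⟨i, j, hij, c, hc⟩ :=
        caseTwo (newton F) hmemP hT2G hT2t hT1G hT1t f1 hyrep hxrep g hgT2 hgT1 hext'
      exact ⟨j, i, hij.symm, c, by rw [← neg_sub x y, hc, ← smul_neg, neg_sub]⟩
  · -- different simplex vertices: swap them
    have huuP := hmemP T1 hT1G hT1t f2
    have hvvP := hmemP T2 hT2G hT2t f1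
    have hsum : (nuF G T1 + Pi.single f2 1) + (nuF G T2 + Pi.single f1 1) = x + y := by
      rw [hxrep, hyrep]; abel
    have hz_seg : (2⁻¹ : ℝ) • x + (2⁻¹ : ℝ) • y ∈ segment ℝ x y :=
      ⟨2⁻¹, 2⁻¹, by norm_num, by norm_num, by norm_num, rfl⟩
    have hz_open : (2⁻¹ : ℝ) • x + (2⁻¹ : ℝ) • y ∈
        openSegment ℝ (nuF G T1 + Pi.single f2 1) (nuF G T2 + Pi.single f1 1) := by
      refine ⟨2⁻¹, 2⁻¹, by norm_num, by norm_num, by norm_num, ?_⟩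
      rw [← smul_add, hsum, smul_add]
    have huu := hext.2 huuP hvvP hz_seg hz_open
    rw [segment_eq_image] at huu
    obtain ⟨t, ht, hteq⟩ := huu
    have hdiff : (nuF G T1 + Pi.single f2 1) - x = Pi.single f2 1 - Pi.single f1 1 := by
      rw [hxrep]; abel
    have htne : t ≠ 0 := by
      intro h0
      rw [h0] at hteq
      simp only [sub_zero, one_smul, zero_smul, add_zero] at hteq
      have h1 : Pi.single f2 1 - Pi.single f1 1 = (0 : G.edgeSet → ℝ) := by
        rw [← hdiff, hteq, sub_self]
      have h2 := congrFun h1 f2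
      rw [Pi.sub_apply, Pi.single_eq_same, Pi.single_eq_of_ne (Ne.symm hf12), Pi.zero_apply] at h2
      norm_num at h2
    have hkey : (nuF G T1 + Pi.single f2 1) - x = t • (y - x) := by
      rw [← hteq]
      module
    have hfinal : y - x = t⁻¹ • ((Pi.single f2 1 : G.edgeSet → ℝ) - Pi.single f1 1) := by
      rw [← hdiff, hkey, smul_smul, inv_mul_cancel₀ htne, one_smul]
    exact ⟨f2, f1, Ne.symm hf12, t⁻¹, hfinal⟩
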